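/- Let $H_1$ and $H_2$ be connected graphs on disjoint vertex sets such that $c_{H_i}(T) = |T|+1$ for all $T \in \mathcal{C}(H_i)$, $i = 1,2$. Then the join $G = H_1 * H_2$ satisfies $c_G(T) = |T| + 1$ for all $T \in \mathcal{C}(G)$ if and only if $H_1$ and $H_2$ are both complete graphs. -/

import Mathlib

open SimpleGraph Set

/-- Number of connected components of the induced subgraph of `G` on `s`. -/
noncomputable def nc {V : Type*} (G : SimpleGraph V) (s : Set V) : ℕ :=
  Nat.card (G.induce s).ConnectedComponent

/-- `T` has the cut point property for `G`: every `i ∈ T` is a cut point of the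
induced subgraph on `Tᶜ ∪ {i}` (removing `i` increases the number of components). -/
def CutPointProperty {V : Type*} (G : SimpleGraph V) (T : Set V) : Prop :=
  ∀ i ∈ T, nc G (Tᶜ ∪ {i}) < nc G Tᶜ

/-- The join `G₁ * G₂` of two graphs on disjoint vertex sets. -/
def joinGraph {V₁ V₂ : Type*} (G₁ : SimpleGraph V₁) (G₂ : SimpleGraph V₂) :
    SimpleGraph (V₁ ⊕ V₂) where
  Adj v w :=
    match v, w with
    | Sum.inl a, Sum.inl b => G₁.Adj a b
    | Sum.inr a, Sum.inr b => G₂.Adj a b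
    | Sum.inl _, Sum.inr _ => True
    | Sum.inr _, Sum.inl _ => True
  symm := by refine ⟨?_⟩; rintro (a | a) (b | b) h <;> simp_all <;> exact h.symm
  loopless := by refine ⟨?_⟩; rintro (a | a) h <;> simp_all

/-- Disjoint union of an indexed family of graphs. -/
def sigmaGraph {ι : Type*} {V : ι → Type*} (G : ∀ i, SimpleGraph (V i)) :
    SimpleGraph (Σ i, V i) where
  Adj v w := ∃ h : v.1 = w.1, (G w.1).Adj (h ▸ v.2) w.2
  symm := by
    refine ⟨?_⟩
    rintro ⟨i, a⟩ ⟨j, b⟩ ⟨h, hab⟩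
    dsimp at h hab ⊢
    subst h
    exact ⟨rfl, hab.symm⟩
  loopless := by
    refine ⟨?_⟩
    rintro ⟨i, a⟩ ⟨h, hab⟩
    dsimp at h hab
    exact (G i).irrefl hab
/-- The corona `H ⊙ H'`: one copy of `H'` for each vertex `v` of `H`,
with every vertex of the copy joined to `v`. -/
def coronaGraph {V₁ V₂ : Type*} (H : SimpleGraph V₁) (H' : SimpleGraph V₂) :
    SimpleGraph (V₁ ⊕ V₁ × V₂) where
  Adj v w :=
    match v, w with
    | Sum.inl a, Sum.inl b => H.Adj a b
    | Sum.inl a, Sum.inr p => a = p.1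
    | Sum.inr p, Sum.inl b => p.1 = b
    | Sum.inr p, Sum.inr q => p.1 = q.1 ∧ H'.Adj p.2 q.2
  symm := by
    refine ⟨?_⟩
    rintro (a | p) (b | q) h <;> dsimp at h ⊢
    · exact h.symm
    · exact h.symm
    · exact h.symm
    · exact ⟨h.1.symm, h.2.symm⟩
  loopless := by refine ⟨?_⟩; rintro (a | p) h <;> simp_all

/-- The whisker graph `W(H)`: a pendant vertex attached to each vertex of `H`. -/
def whiskerGraph {V : Type*} (H : SimpleGraph V) : SimpleGraph (V ⊕ V) where
  Adj v w :=
    match v, w with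
    | Sum.inl a, Sum.inl b => H.Adj a b
    | Sum.inl a, Sum.inr b => a = b
    | Sum.inr a, Sum.inl b => a = b
    | Sum.inr _, Sum.inr _ => False
  symm := by refine ⟨?_⟩; rintro (a | a) (b | b) h <;> simp_all; exact h.symm
  loopless := by refine ⟨?_⟩; rintro (a | a) h <;> simp_all

/-- `F` is (the vertex set of) a maximal clique of `G`. -/
def MaxClique {V : Type*} (G : SimpleGraph V) (F : Set V) : Prop :=
  Maximal G.IsClique F

/-- A graph is chordal if every cycle of length at least 4 has a chord. -/
def IsChordal {V : Type*} (G : SimpleGraph V) : Prop :=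
  ∀ (n : ℕ), 4 ≤ n → ∀ c : ℕ → V, Set.InjOn c (Set.Iio n) →
    (∀ i < n, G.Adj (c i) (c ((i + 1) % n))) →
    ∃ i < n, ∃ j < n, j ≠ i ∧ j ≠ (i + 1) % n ∧ i ≠ (j + 1) % n ∧ G.Adj (c i) (c j)

/-- A generalized block graph: a connected chordal graph in which any three distinct
maximal cliques with nonempty common intersection have all pairwise intersections equal. -/
def GenBlockGraph {V : Type*} (G : SimpleGraph V) : Prop :=
  G.Connected ∧ IsChordal G ∧
    ∀ F₁ F₂ F₃ : Set V, MaxClique G F₁ → MaxClique G F₂ → MaxClique G F₃ →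
      F₁ ≠ F₂ → F₁ ≠ F₃ → F₂ ≠ F₃ → (F₁ ∩ F₂ ∩ F₃).Nonempty →
      F₁ ∩ F₂ = F₁ ∩ F₃ ∧ F₁ ∩ F₂ = F₂ ∩ F₃

/-- `A` is a cut set of `G`: deleting `A` increases the number of connected components. -/
def IsCutSet {V : Type*} (G : SimpleGraph V) (A : Set V) : Prop :=
  nc G Set.univ < nc G Aᶜ

/-- `A` is an inclusion-minimal cut set of `G`. -/
def IsMinCutSet {V : Type*} (G : SimpleGraph V) (A : Set V) : Prop :=
  IsCutSet G A ∧ ∀ B ⊂ A, ¬ IsCutSet G B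

/-- `A` is a `t`-minimal cut set of `G`: a minimal cut set which is the common
intersection of exactly `t` maximal cliques of `G` and disjoint from all other
maximal cliques. -/
def IsTMinCut {V : Type*} (G : SimpleGraph V) (t : ℕ) (A : Set V) : Prop :=
  IsMinCutSet G A ∧
  {F : Set V | MaxClique G F ∧ A ⊆ F}.ncard = t ∧
  ⋂₀ {F : Set V | MaxClique G F ∧ A ⊆ F} = A ∧
  ∀ F : Set V, MaxClique G F → ¬ A ⊆ F → F ∩ A = ∅

/-- `B` is a branch of the facet `F` in the clique complex of `G`. -/
def IsBranch {V : Type*} (G : SimpleGraph V) (F B : Set V) : Prop :=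
  MaxClique G B ∧ B ≠ F ∧ ∀ H : Set V, MaxClique G H → H ≠ F → H ∩ F ⊆ B ∩ F

/-- `F` is a leaf of the clique complex of `G`. -/
def IsLeafClique {V : Type*} (G : SimpleGraph V) (F : Set V) : Prop :=
  MaxClique G F ∧ ((∀ F' : Set V, MaxClique G F' → F' = F) ∨ ∃ B, IsBranch G F B)


section AuxLemmas

open SimpleGraph Set

variable {V W : Type*}

lemma nc_eq_of_induce_iso {G : SimpleGraph V} {G' : SimpleGraph W} {s : Set V} {t : Set W}
    (e : G.induce s ≃g G'.induce t) : nc G s = nc G' t :=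
  Nat.card_congr e.connectedComponentEquiv

lemma nc_eq_one_of_connected {G : SimpleGraph V} {s : Set V} (h : (G.induce s).Connected) :
    nc G s = 1 := by
  rw [nc, Nat.card_eq_one_iff_unique]
  refine ⟨⟨fun c d => ?_⟩, ?_⟩
  · refine SimpleGraph.ConnectedComponent.ind₂ (fun v w => ?_) c d
    exact SimpleGraph.ConnectedComponent.sound (h.preconnected v w)
  · have := h.nonempty
    exact ⟨(G.induce s).connectedComponentMk this.some⟩

lemma induce_connected_of_forall_adj {G : SimpleGraph V} {s : Set V} (hne : s.Nonempty)
    (h : ∀ x y : V, x ≠ y → G.Adj x y) : (G.induce s).Connected := by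
  rw [connected_iff]
  refine ⟨fun x y => ?_, ⟨⟨hne.some, hne.some_mem⟩⟩⟩
  by_cases hxy : x = y
  · subst hxy; exact Reachable.refl _
  · have : (x : V) ≠ (y : V) := fun hv => hxy (Subtype.ext hv)
    have hadj : (G.induce s).Adj x y := h (x : V) (y : V) this
    exact hadj.reachable

lemma nc_empty {G : SimpleGraph V} : nc G (∅ : Set V) = 0 := by
  haveI : IsEmpty ((∅ : Set V) : Set V).Elem := by
    constructor; rintro ⟨x, hx⟩; exact hx
  haveI : IsEmpty (G.induce (∅ : Set V)).ConnectedComponent := by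
    constructor
    intro c
    exact SimpleGraph.ConnectedComponent.ind (fun v => isEmptyElim v) c
  exact Nat.card_of_isEmpty

/-- Transfer a walk in `induce t` whose support lies in `u` to reachability in `induce u`. -/
lemma reachable_of_support {G : SimpleGraph V} {u t : Set V} :
    ∀ {x y : t} (p : (G.induce t).Walk x y), (∀ v ∈ p.support, (v : V) ∈ u) →
      ∀ (hx : (x : V) ∈ u) (hy : (y : V) ∈ u),
        (G.induce u).Reachable ⟨(x : V), hx⟩ ⟨(y : V), hy⟩ := by
  intro x y p
  induction p with
  | nil => intro _ hx hy; exact Reachable.refl _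
  | @cons x m y h q ih =>
    intro hp hx hy
    have hm : (m : V) ∈ u := hp m (by simp [SimpleGraph.Walk.support_cons])
    have hadj : (G.induce u).Adj ⟨(x : V), hx⟩ ⟨(m : V), hm⟩ := h
    exact hadj.reachable.trans
      (ih (fun v hv => hp v (by simp [SimpleGraph.Walk.support_cons, hv])) hm hy)

/-- Key counting lemma: if `a, b ∈ u` are reachable in `induce (u ∪ {i})` but not in
`induce u`, then the component count strictly drops. -/
lemma nc_union_singleton_lt [Fintype V] (G : SimpleGraph V) {u t : Set V} {i a b : V}
    (ht : t = u ∪ {i}) (ha : a ∈ u) (hb : b ∈ u)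
    (ha' : a ∈ t) (hb' : b ∈ t)
    (hr : (G.induce t).Reachable ⟨a, ha'⟩ ⟨b, hb'⟩)
    (hnr : ¬ (G.induce u).Reachable ⟨a, ha⟩ ⟨b, hb⟩) :
    nc G t < nc G u := by
  subst ht
  classical
  set φ : G.induce u →g G.induce (u ∪ {i}) :=
    { toFun := fun v => ⟨(v : V), Or.inl v.2⟩, map_rel' := fun h => h } with hφ
  set f := SimpleGraph.ConnectedComponent.map φ with hf
  obtain ⟨w⟩ := hr
  have hsurj : Function.Surjective f := by
    intro c
    refine SimpleGraph.ConnectedComponent.ind (fun v => ?_) c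
    rcases v.2 with hv | hv
    · refine ⟨(G.induce u).connectedComponentMk ⟨(v : V), hv⟩, ?_⟩
      rw [hf, SimpleGraph.ConnectedComponent.map_mk]
      congr 1
    · -- (v : V) = i
      by_cases hsup : ∀ x ∈ w.support, (x : V) ∈ u
      · exact absurd (reachable_of_support w hsup ha hb) hnr
      · push_neg at hsup
        obtain ⟨x, hxsup, hxu⟩ := hsup
        have hxi : (x : V) = i := by
          rcases x.2 with h' | h'
          · exact absurd h' hxu
          · exact h'
        have hxv : x = v := Subtype.ext (by rw [hxi]; exact hv.symm)
        have hreach : (G.induce (u ∪ {i})).Reachable ⟨a, ha'⟩ v :=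
          ⟨(w.takeUntil v (hxv ▸ hxsup))⟩
        refine ⟨(G.induce u).connectedComponentMk ⟨a, ha⟩, ?_⟩
        rw [hf, SimpleGraph.ConnectedComponent.map_mk]
        exact SimpleGraph.ConnectedComponent.sound hreach
  have hfab : f ((G.induce u).connectedComponentMk ⟨a, ha⟩) =
      f ((G.induce u).connectedComponentMk ⟨b, hb⟩) := by
    rw [hf, SimpleGraph.ConnectedComponent.map_mk, SimpleGraph.ConnectedComponent.map_mk]
    exact SimpleGraph.ConnectedComponent.sound ⟨w⟩
  have hab : (G.induce u).connectedComponentMk ⟨a, ha⟩ ≠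
      (G.induce u).connectedComponentMk ⟨b, hb⟩ := by
    intro h
    exact hnr (SimpleGraph.ConnectedComponent.eq.mp h)
  have hle : nc G (u ∪ {i}) ≤ nc G u := Nat.card_le_card_of_surjective f hsurj
  rcases lt_or_eq_of_le hle with h | h
  · exact h
  · exfalso
    have hbij : Function.Bijective f :=
      hsurj.bijective_of_nat_card_le (le_of_eq h.symm)
    exact hab (hbij.injective hfab)

lemma exists_nonadj {G : SimpleGraph V} (h : G ≠ ⊤) : ∃ a b, a ≠ b ∧ ¬ G.Adj a b := by
  by_contra hc
  push_neg at hc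
  apply h
  ext a b
  simp only [SimpleGraph.top_adj]
  exact ⟨fun h' => h'.ne, fun h' => hc a b h'⟩

/-- `S` separates `a` from `b` in `G`. -/
def Separates (G : SimpleGraph V) (a b : V) (S : Set V) : Prop :=
  ∃ (ha : a ∈ Sᶜ) (hb : b ∈ Sᶜ), ¬ (G.induce Sᶜ).Reachable ⟨a, ha⟩ ⟨b, hb⟩

lemma induce_reachable_of_eq_univ {G : SimpleGraph V} (hconn : G.Connected) {s : Set V}
    (hs : s = Set.univ) {a b : V} (ha : a ∈ s) (hb : b ∈ s) :
    (G.induce s).Reachable ⟨a, ha⟩ ⟨b, hb⟩ := by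
  subst hs
  exact (SimpleGraph.Iso.reachable_iff (φ := induceUnivIso G)
    (u := ⟨a, ha⟩) (v := ⟨b, hb⟩)).mp (hconn.preconnected a b)

/-- A connected non-complete graph has a nonempty set with the cut point property. -/
lemma exists_cpp_nonempty [Fintype V] {G : SimpleGraph V} (hconn : G.Connected)
    (hne : G ≠ ⊤) : ∃ S : Set V, S.Nonempty ∧ CutPointProperty G S := by
  classical
  obtain ⟨a, b, hab, hnadj⟩ := exists_nonadj hne
  -- the complement of {a, b} separates a from b
  have hPne : Separates G a b ({a, b} : Set V)ᶜ := by
    have ha : a ∈ (({a, b} : Set V)ᶜ)ᶜ := by simp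
    have hb : b ∈ (({a, b} : Set V)ᶜ)ᶜ := by simp
    refine ⟨ha, hb, ?_⟩
    have hbot : G.induce ((({a, b} : Set V)ᶜ)ᶜ) = ⊥ := by
      ext x y
      simp only [SimpleGraph.bot_adj, iff_false]
      intro hadj
      have hx : (x : V) ∈ ({a, b} : Set V) := by simpa using x.2
      have hy : (y : V) ∈ ({a, b} : Set V) := by simpa using y.2
      have hadj' : G.Adj (x : V) (y : V) := hadj
      rcases hx with hx | hx <;> rcases hy with hy | hy
      · exact G.irrefl (by rwa [hx, hy] at hadj')
      · exact hnadj (by rwa [hx, hy] at hadj')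
      · rw [hx, hy] at hadj'
        exact hnadj hadj'.symm
      · exact G.irrefl (by rwa [hx, hy] at hadj')
    rw [hbot]
    intro hreach
    rw [SimpleGraph.reachable_bot] at hreach
    exact hab (congrArg Subtype.val hreach)
  -- take a separating set of minimal cardinality
  set M : Set ℕ := {n | ∃ S, Separates G a b S ∧ S.ncard = n} with hM
  have hMne : M.Nonempty := ⟨_, _, hPne, rfl⟩
  obtain ⟨S, hPS, hScard⟩ := Nat.sInf_mem hMne
  obtain ⟨haS, hbS, hSsep⟩ := hPS
  -- S is nonempty
  have hSne : S.Nonempty := by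
    rw [Set.nonempty_iff_ne_empty]
    rintro rfl
    exact hSsep (induce_reachable_of_eq_univ hconn (by simp) haS hbS)
  refine ⟨S, hSne, ?_⟩
  intro i hi
  -- minimality: S \ {i} does not separate a from b
  have hlt : (S \ {i}).ncard < S.ncard := Set.ncard_diff_singleton_lt_of_mem hi (Set.toFinite S)
  have hnP : ¬ Separates G a b (S \ {i}) := by
    intro hP'
    have : (S \ {i}).ncard ∈ M := ⟨_, hP', rfl⟩
    have := Nat.sInf_le this
    omega
  rw [Separates] at hnP
  push_neg at hnP
  have ha' : a ∈ (S \ {i})ᶜ := fun h => haS h.1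
  have hb' : b ∈ (S \ {i})ᶜ := fun h => hbS h.1
  have hreach := hnP ha' hb'
  have hset : (S \ {i})ᶜ = Sᶜ ∪ {i} := by
    rw [Set.diff_eq, Set.compl_inter, compl_compl]
  have := nc_union_singleton_lt G hset haS hbS ha' hb' hreach hSsep
  rw [← hset]
  exact this

/-- Induced subgraph of the join on an `inl`-image is isomorphic to the induced subgraph. -/
noncomputable def joinInlIso {V₁ V₂ : Type*} (H₁ : SimpleGraph V₁) (H₂ : SimpleGraph V₂) (s : Set V₁) :
    H₁.induce s ≃g (joinGraph H₁ H₂).induce (Sum.inl '' s) where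
  toEquiv := Equiv.Set.image Sum.inl s Sum.inl_injective
  map_rel_iff' := Iff.rfl

lemma nc_join_inl {V₁ V₂ : Type*} (H₁ : SimpleGraph V₁) (H₂ : SimpleGraph V₂) (s : Set V₁) :
    nc (joinGraph H₁ H₂) (Sum.inl '' s) = nc H₁ s :=
  (nc_eq_of_induce_iso (joinInlIso H₁ H₂ s)).symm

lemma join_induce_hub_connected {V₁ V₂ : Type*} (H₁ : SimpleGraph V₁) (H₂ : SimpleGraph V₂)
    (u : Set V₁) (y : V₂) :
    ((joinGraph H₁ H₂).induce (Sum.inl '' u ∪ {Sum.inr y})).Connected := by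
  rw [connected_iff]
  set z : (Sum.inl '' u ∪ {Sum.inr y} : Set (V₁ ⊕ V₂)) :=
    ⟨Sum.inr y, Or.inr rfl⟩ with hz
  have hhub : ∀ v : (Sum.inl '' u ∪ {Sum.inr y} : Set (V₁ ⊕ V₂)),
      ((joinGraph H₁ H₂).induce (Sum.inl '' u ∪ {Sum.inr y})).Reachable v z := by
    intro v
    rcases v.2 with hv | hv
    · obtain ⟨x, _, hx⟩ := hv
      have hadj : ((joinGraph H₁ H₂).induce (Sum.inl '' u ∪ {Sum.inr y})).Adj v z := by
        show (joinGraph H₁ H₂).Adj (v : V₁ ⊕ V₂) (Sum.inr y)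
        rw [← hx]
        trivial
      exact hadj.reachable
    · have : v = z := Subtype.ext hv
      rw [this]
  exact ⟨fun x w => (hhub x).trans (hhub w).symm, ⟨z⟩⟩

/-- The join is symmetric. -/
def joinComm {V₁ V₂ : Type*} (H₁ : SimpleGraph V₁) (H₂ : SimpleGraph V₂) :
    joinGraph H₂ H₁ ≃g joinGraph H₁ H₂ where
  toEquiv := Equiv.sumComm V₂ V₁
  map_rel_iff' := by rintro (a | a) (b | b) <;> exact Iff.rfl

/-- Induced subgraphs are preserved by isomorphisms. -/
noncomputable def isoInduce {G : SimpleGraph V} {G' : SimpleGraph W} (e : G ≃g G') (s : Set V) :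
    G.induce s ≃g G'.induce (e '' s) where
  toEquiv := e.toEquiv.image s
  map_rel_iff' := by intro a b; exact e.map_rel_iff

lemma nc_image {G : SimpleGraph V} {G' : SimpleGraph W} (e : G ≃g G') (s : Set V) :
    nc G' (e '' s) = nc G s :=
  (nc_eq_of_induce_iso (isoInduce e s)).symm

lemma cpp_image {G : SimpleGraph V} {G' : SimpleGraph W} (e : G ≃g G') {T : Set V}
    (h : CutPointProperty G T) : CutPointProperty G' (e '' T) := by
  intro j hj
  obtain ⟨i, hiT, rfl⟩ := hj
  have h1 : (⇑e '' T)ᶜ = ⇑e '' Tᶜ := (Set.image_compl_eq (f := ⇑e) e.bijective).symm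
  rw [h1, ← Set.image_singleton, ← Set.image_union, nc_image, nc_image]
  exact h i hiT

/-- Key lemma: if `H₁` is not complete, the join is not unmixed. -/
lemma join_key {V₁ V₂ : Type*} [Fintype V₁] [Fintype V₂] [Nonempty V₂]
    (H₁ : SimpleGraph V₁) (H₂ : SimpleGraph V₂) (h₁ : H₁.Connected)
    (hu₁ : ∀ T : Set V₁, CutPointProperty H₁ T → nc H₁ Tᶜ = T.ncard + 1)
    (hne : H₁ ≠ ⊤) :
    ∃ T : Set (V₁ ⊕ V₂), CutPointProperty (joinGraph H₁ H₂) T ∧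
      nc (joinGraph H₁ H₂) Tᶜ ≠ T.ncard + 1 := by
  classical
  obtain ⟨S, hSne, hScpp⟩ := exists_cpp_nonempty h₁ hne
  have hcS : nc H₁ Sᶜ = S.ncard + 1 := hu₁ S hScpp
  have hSpos : 0 < S.ncard := (Set.ncard_pos (Set.toFinite S)).mpr hSne
  set T : Set (V₁ ⊕ V₂) := Sum.inl '' S ∪ Set.range Sum.inr with hT
  have hTc : Tᶜ = Sum.inl '' Sᶜ := by
    ext v
    rcases v with x | y
    · simp [hT]
    · simp [hT]
  have hncTc : nc (joinGraph H₁ H₂) Tᶜ = S.ncard + 1 := by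
    rw [hTc, nc_join_inl, hcS]
  refine ⟨T, ?_, ?_⟩
  · intro i hi
    rcases i with x | y
    · have hx : x ∈ S := by
        rcases hi with h' | h'
        · obtain ⟨x', hx', he⟩ := h'
          exact (Sum.inl_injective he) ▸ hx'
        · obtain ⟨y, hy⟩ := h'
          exact absurd hy (by simp)
      have heq : Tᶜ ∪ {Sum.inl x} = Sum.inl '' (Sᶜ ∪ {x}) := by
        rw [hTc, Set.image_union, Set.image_singleton]
      rw [heq, nc_join_inl, hncTc]
      have := hScpp x hx
      omega
    · have heq : Tᶜ ∪ {Sum.inr y} = Sum.inl '' Sᶜ ∪ {Sum.inr y} := by rw [hTc]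
      rw [heq, nc_eq_one_of_connected (join_induce_hub_connected H₁ H₂ Sᶜ y), hncTc]
      omega
  · have hsub : Sum.inl '' S ⊂ T := by
      refine ⟨Set.subset_union_left, fun hsub' => ?_⟩
      have : (Sum.inr (Classical.arbitrary V₂) : V₁ ⊕ V₂) ∈ Sum.inl '' S :=
        hsub' (Or.inr ⟨Classical.arbitrary V₂, rfl⟩)
      obtain ⟨x, _, hx⟩ := this
      exact Sum.inl_ne_inr hx
    have hlt : (Sum.inl '' S).ncard < T.ncard := Set.ncard_lt_ncard hsub (Set.toFinite T)
    rw [Set.ncard_image_of_injective S Sum.inl_injective] at hlt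
    rw [hncTc]
    omega

lemma cpp_eq_empty [Fintype V] {G : SimpleGraph V} (hall : ∀ x y : V, x ≠ y → G.Adj x y)
    {T : Set V} (h : CutPointProperty G T) : T = ∅ := by
  by_contra hTne
  obtain ⟨i, hi⟩ := Set.nonempty_iff_ne_empty.mpr hTne
  have hlt := h i hi
  have h1 : nc G (Tᶜ ∪ {i}) = 1 :=
    nc_eq_one_of_connected
      (induce_connected_of_forall_adj ⟨i, Or.inr rfl⟩ hall)
  rcases Set.eq_empty_or_nonempty Tᶜ with he | hne'
  · rw [he, nc_empty] at hlt
    omega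
  · have h2 : nc G Tᶜ = 1 :=
      nc_eq_one_of_connected (induce_connected_of_forall_adj hne' hall)
    omega

end AuxLemmas

/-- the join of two connected unmixed graphs is unmixed (in the
Rauf–Rinaldo sense) iff both are complete. -/
theorem stmt12 {V₁ V₂ : Type*} [Fintype V₁] [Fintype V₂]
    (H₁ : SimpleGraph V₁) (H₂ : SimpleGraph V₂)
    (h₁ : H₁.Connected) (h₂ : H₂.Connected)
    (hu₁ : ∀ T : Set V₁, CutPointProperty H₁ T → nc H₁ Tᶜ = T.ncard + 1)
    (hu₂ : ∀ T : Set V₂, CutPointProperty H₂ T → nc H₂ Tᶜ = T.ncard + 1) :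
    (∀ T : Set (V₁ ⊕ V₂), CutPointProperty (joinGraph H₁ H₂) T →
        nc (joinGraph H₁ H₂) Tᶜ = T.ncard + 1) ↔
      (H₁ = ⊤ ∧ H₂ = ⊤) := by
  constructor
  · intro hG
    by_contra hc
    rcases not_and_or.mp hc with hne1 | hne2
    · haveI : Nonempty V₂ := h₂.nonempty
      obtain ⟨T, hT, hTne⟩ := join_key H₁ H₂ h₁ hu₁ hne1
      exact hTne (hG T hT)
    · haveI : Nonempty V₁ := h₁.nonempty
      obtain ⟨T, hT, hTne⟩ := join_key H₂ H₁ h₂ hu₂ hne2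
      set e := joinComm H₁ H₂ with he
      have hcpp := cpp_image e hT
      have := hG (⇑e '' T) hcpp
      rw [show (⇑e '' T)ᶜ = ⇑e '' Tᶜ from (Set.image_compl_eq (f := ⇑e) e.bijective).symm,
        nc_image, Set.ncard_image_of_injective T e.injective] at this
      exact hTne this
  · rintro ⟨rfl, rfl⟩
    intro T hT
    have hall : ∀ x y : V₁ ⊕ V₂, x ≠ y → (joinGraph ⊤ ⊤).Adj x y := by
      rintro (a | a) (b | b) hxy
      · have : a ≠ b := fun h => hxy (by rw [h])
        exact this
      · trivial
      · trivial
      · have : a ≠ b := fun h => hxy (by rw [h])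
        exact this
    have hTe : T = ∅ := cpp_eq_empty hall hT
    subst hTe
    rw [Set.compl_empty, Set.ncard_empty]
    haveI : Nonempty V₁ := h₁.nonempty
    have : (Set.univ : Set (V₁ ⊕ V₂)).Nonempty := ⟨Sum.inl (Classical.arbitrary V₁), trivial⟩
    rw [nc_eq_one_of_connected (induce_connected_of_forall_adj this hall)]
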